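/- Let u be a Schwartz-class solution of the derivative nonlinear Schrödinger equation i∂_t u + ∂_x² u = −i∂_x(|u|² u). Then the energy E(u(t)) = ∫_ℝ ( |∂_x u(t,x)|² − (3/2) Im( |u(t,x)|² u(t,x) \overline{∂_x u(t,x)} ) + (1/2) |u(t,x)|⁶ ) dx is independent of t. -/

import Mathlib

open MeasureTheory Complex

/-- A Schwartz-class solution of the derivative nonlinear Schrödinger equation
`i∂_t u + ∂_x² u = −i∂_x(|u|²u)`: `u` is smooth in both variables, `u(t,·)` is Schwartz
for every `t`, all space-time derivatives decay rapidly in `x` uniformly for `t` in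
compact sets, and the equation holds pointwise. -/
def IsDNLSSolution (u : ℝ → ℝ → ℂ) : Prop :=
  ContDiff ℝ (⊤ : ℕ∞) (fun q : ℝ × ℝ => u q.1 q.2) ∧
  (∀ t : ℝ, ∃ φ : SchwartzMap ℝ ℂ, ∀ x : ℝ, φ x = u t x) ∧
  (∀ (i j k : ℕ) (K : Set ℝ), IsCompact K → ∃ C : ℝ, ∀ t ∈ K, ∀ x : ℝ,
    |x| ^ k * ‖iteratedDeriv i (fun s => iteratedDeriv j (fun y => u s y) x) t‖ ≤ C) ∧
  (∀ t x : ℝ,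
    Complex.I * deriv (fun s => u s x) t + deriv (deriv (u t)) x
      = -Complex.I * deriv (fun y => (‖u t y‖ : ℂ) ^ 2 * u t y) x)

/-- The DNLS energy functional
`E(v) = ∫ ( |v_x|² − (3/2) Im(|v|² v conj(v_x)) + (1/2)|v|⁶ ) dx`. -/
noncomputable def energy (v : ℝ → ℂ) : ℝ :=
  ∫ x : ℝ, (‖deriv v x‖ ^ 2
    - (3 / 2) * ((‖v x‖ : ℂ) ^ 2 * v x * (starRingEnd ℂ) (deriv v x)).im
    + (1 / 2) * ‖v x‖ ^ 6)

set_option maxHeartbeats 1000000 in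
theorem dummy_heartbeat_placeholder : True := trivial

set_option maxHeartbeats 1000000

/-! ### Auxiliary infrastructure -/

noncomputable def ptd (f : ℝ × ℝ → ℂ) : ℝ × ℝ → ℂ := fun p => fderiv ℝ f p (1, 0)
noncomputable def pxd (f : ℝ × ℝ → ℂ) : ℝ × ℝ → ℂ := fun p => fderiv ℝ f p (0, 1)

theorem contDiff_ptd {f : ℝ × ℝ → ℂ} (hf : ContDiff ℝ (⊤:ℕ∞) f) : ContDiff ℝ (⊤:ℕ∞) (ptd f) :=
  (hf.fderiv_right (m := (⊤:ℕ∞)) (by norm_cast)).clm_apply contDiff_const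

theorem contDiff_pxd {f : ℝ × ℝ → ℂ} (hf : ContDiff ℝ (⊤:ℕ∞) f) : ContDiff ℝ (⊤:ℕ∞) (pxd f) :=
  (hf.fderiv_right (m := (⊤:ℕ∞)) (by norm_cast)).clm_apply contDiff_const

theorem hasDerivAt_pxd {f : ℝ × ℝ → ℂ} (hf : ContDiff ℝ (⊤:ℕ∞) f) (t x : ℝ) :
    HasDerivAt (fun y => f (t, y)) (pxd f (t, x)) x :=
  ((hf.differentiable (by norm_cast) (t, x)).hasFDerivAt).comp_hasDerivAt x
    ((hasDerivAt_const x t).prodMk (hasDerivAt_id x))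

theorem hasDerivAt_ptd {f : ℝ × ℝ → ℂ} (hf : ContDiff ℝ (⊤:ℕ∞) f) (t x : ℝ) :
    HasDerivAt (fun s => f (s, x)) (ptd f (t, x)) t :=
  ((hf.differentiable (by norm_cast) (t, x)).hasFDerivAt).comp_hasDerivAt t
    ((hasDerivAt_id t).prodMk (hasDerivAt_const t x))

theorem clairaut {f : ℝ × ℝ → ℂ} (hf : ContDiff ℝ (⊤:ℕ∞) f) (t x : ℝ) :
    ptd (pxd f) (t, x) = pxd (ptd f) (t, x) := by
  have hd : Differentiable ℝ f := hf.differentiable (by norm_cast)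
  have hd2 : DifferentiableAt ℝ (fderiv ℝ f) (t, x) :=
    ((hf.fderiv_right (m := (⊤:ℕ∞)) (by norm_cast)).differentiable (by norm_cast)) (t, x)
  have h1 : ptd (pxd f) (t, x) = fderiv ℝ (fderiv ℝ f) (t, x) (1, 0) (0, 1) := by
    show fderiv ℝ (fun p => fderiv ℝ f p ((0:ℝ), (1:ℝ))) (t, x) (1, 0) = _
    rw [fderiv_clm_apply hd2 (differentiableAt_const _)]
    simp
  have h2 : pxd (ptd f) (t, x) = fderiv ℝ (fderiv ℝ f) (t, x) (0, 1) (1, 0) := by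
    show fderiv ℝ (fun p => fderiv ℝ f p ((1:ℝ), (0:ℝ))) (t, x) (0, 1) = _
    rw [fderiv_clm_apply hd2 (differentiableAt_const _)]
    simp
  rw [h1, h2]
  exact second_derivative_symmetric (fun y => (hd y).hasFDerivAt) hd2.hasFDerivAt _ _

noncomputable def vb (u : ℝ → ℝ → ℂ) : ℝ × ℝ → ℂ := pxd (fun q => u q.1 q.2)
noncomputable def vc (u : ℝ → ℝ → ℂ) : ℝ × ℝ → ℂ := pxd (vb u)
noncomputable def vd (u : ℝ → ℝ → ℂ) : ℝ × ℝ → ℂ := pxd (vc u)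
noncomputable def vt (u : ℝ → ℝ → ℂ) : ℝ × ℝ → ℂ := ptd (fun q => u q.1 q.2)
noncomputable def vt1 (u : ℝ → ℝ → ℂ) : ℝ × ℝ → ℂ := ptd (vb u)

section
variable {u : ℝ → ℝ → ℂ} (hsm : ContDiff ℝ (⊤:ℕ∞) (fun q : ℝ × ℝ => u q.1 q.2))
include hsm

theorem smb : ContDiff ℝ (⊤:ℕ∞) (vb u) := contDiff_pxd hsm
theorem smc : ContDiff ℝ (⊤:ℕ∞) (vc u) := contDiff_pxd (smb hsm)
theorem smd : ContDiff ℝ (⊤:ℕ∞) (vd u) := contDiff_pxd (smc hsm)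
theorem smt : ContDiff ℝ (⊤:ℕ∞) (vt u) := contDiff_ptd hsm
theorem smt1 : ContDiff ℝ (⊤:ℕ∞) (vt1 u) := contDiff_ptd (smb hsm)

theorem Hbx (t x : ℝ) : HasDerivAt (fun y => u t y) (vb u (t, x)) x := hasDerivAt_pxd hsm t x
theorem Hcx (t x : ℝ) : HasDerivAt (fun y => vb u (t, y)) (vc u (t, x)) x := hasDerivAt_pxd (smb hsm) t x
theorem Hdx (t x : ℝ) : HasDerivAt (fun y => vc u (t, y)) (vd u (t, x)) x := hasDerivAt_pxd (smc hsm) t x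
theorem Hat (t x : ℝ) : HasDerivAt (fun s => u s x) (vt u (t, x)) t := hasDerivAt_ptd hsm t x
theorem Hbt (t x : ℝ) : HasDerivAt (fun s => vb u (s, x)) (vt1 u (t, x)) t := hasDerivAt_ptd (smb hsm) t x

theorem db (t x : ℝ) : deriv (u t) x = vb u (t, x) := (Hbx hsm t x).deriv
theorem dbf (t : ℝ) : deriv (u t) = fun x => vb u (t, x) := funext fun x => db hsm t x
theorem dc (t x : ℝ) : deriv (deriv (u t)) x = vc u (t, x) := by
  rw [dbf hsm]; exact (Hcx hsm t x).deriv
theorem dcf (t : ℝ) : deriv (deriv (u t)) = fun x => vc u (t, x) := funext fun x => dc hsm t x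
theorem dd3 (t x : ℝ) : deriv (deriv (deriv (u t))) x = vd u (t, x) := by
  rw [dcf hsm]; exact (Hdx hsm t x).deriv
theorem dt (t x : ℝ) : deriv (fun s => u s x) t = vt u (t, x) := (Hat hsm t x).deriv
theorem dt1 (t x : ℝ) : deriv (fun s => deriv (u s) x) t = vt1 u (t, x) := by
  have h : (fun s => deriv (u s) x) = fun s => vb u (s, x) := funext fun s => db hsm s x
  rw [h]; exact (Hbt hsm t x).deriv
theorem clair' (t x : ℝ) : vt1 u (t, x) = deriv (fun y => vt u (t, y)) x := by
  have h1 : vt1 u (t, x) = pxd (ptd (fun q : ℝ × ℝ => u q.1 q.2)) (t, x) := clairaut hsm t x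
  rw [h1]; exact (hasDerivAt_pxd (smt hsm) t x).deriv.symm

end

theorem normsq_complex (z : ℂ) : ((‖z‖ : ℂ)) ^ 2 = (starRingEnd ℂ) z * z := by
  rw [← Complex.ofReal_pow, Complex.sq_norm]
  rw [mul_comm, Complex.mul_conj]

section
variable {u : ℝ → ℝ → ℂ} (hsm : ContDiff ℝ (⊤:ℕ∞) (fun q : ℝ × ℝ => u q.1 q.2))
  (heq : ∀ t x : ℝ,
    Complex.I * deriv (fun s => u s x) t + deriv (deriv (u t)) x
      = -Complex.I * deriv (fun y => (‖u t y‖ : ℂ) ^ 2 * u t y) x)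
include hsm heq

theorem pde0 (t x : ℝ) : vt u (t, x) =
    I * vc u (t, x) - 2 * (u t x * (starRingEnd ℂ) (u t x) * vb u (t, x))
      - u t x ^ 2 * (starRingEnd ℂ) (vb u (t, x)) := by
  have h := heq t x
  rw [dt hsm, dc hsm] at h
  have hfun : (fun y => (‖u t y‖ : ℂ) ^ 2 * u t y)
      = fun y => star (u t y) * u t y * u t y := by
    funext y; rw [normsq_complex, starRingEnd_apply]
  rw [hfun] at h
  have hD := (((Hbx hsm t x).star.mul (Hbx hsm t x)).mul (Hbx hsm t x)).deriv
  simp only [Pi.mul_apply] at hD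
  rw [show (fun y => star (u t y) * u t y * u t y)
      = ((fun x => star (u t x)) * fun y => u t y) * fun y => u t y from rfl, hD] at h
  simp only [starRingEnd_apply]
  linear_combination (-Complex.I) * h +
    (vt u (t, x) + 2 * (u t x * star (u t x) * vb u (t, x))
      + u t x ^ 2 * star (vb u (t, x))) * Complex.I_sq

theorem pde0c (t x : ℝ) : (starRingEnd ℂ) (vt u (t, x)) =
    -I * (starRingEnd ℂ) (vc u (t, x))
      - 2 * ((starRingEnd ℂ) (u t x) * u t x * (starRingEnd ℂ) (vb u (t, x)))
      - (starRingEnd ℂ) (u t x) ^ 2 * vb u (t, x) := by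
  rw [pde0 hsm heq t x]
  simp only [map_sub, map_mul, map_pow, map_ofNat, Complex.conj_I, Complex.conj_conj]

theorem pde1 (t x : ℝ) : vt1 u (t, x) =
    I * vd u (t, x) - 2 * ((starRingEnd ℂ) (u t x) * vb u (t, x) ^ 2)
      - 4 * (u t x * vb u (t, x) * (starRingEnd ℂ) (vb u (t, x)))
      - 2 * (u t x * (starRingEnd ℂ) (u t x) * vc u (t, x))
      - u t x ^ 2 * (starRingEnd ℂ) (vc u (t, x)) := by
  rw [clair' hsm t x]
  have hfun : (fun y => vt u (t, y)) = fun y =>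
      I * vc u (t, y) - 2 * (u t y * star (u t y) * vb u (t, y))
        - u t y * u t y * star (vb u (t, y)) := by
    funext y
    rw [pde0 hsm heq t y]
    simp only [starRingEnd_apply]
    ring
  rw [hfun]
  have H : HasDerivAt (fun y =>
      I * vc u (t, y) - 2 * (u t y * star (u t y) * vb u (t, y))
        - u t y * u t y * star (vb u (t, y)))
      (I * vd u (t, x)
        - 2 * ((vb u (t, x) * star (u t x) + u t x * star (vb u (t, x))) * vb u (t, x)
            + u t x * star (u t x) * vc u (t, x))
        - ((vb u (t, x) * u t x + u t x * vb u (t, x)) * star (vb u (t, x))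
            + u t x * u t x * star (vc u (t, x)))) x := by
    exact (((Hdx hsm t x).const_mul I).sub
      ((((Hbx hsm t x).mul (Hbx hsm t x).star).mul (Hcx hsm t x)).const_mul 2)).sub
      ((((Hbx hsm t x).mul (Hbx hsm t x)).mul (Hcx hsm t x).star))
  rw [H.deriv]
  simp only [starRingEnd_apply]
  ring

theorem pde1c (t x : ℝ) : (starRingEnd ℂ) (vt1 u (t, x)) =
    -I * (starRingEnd ℂ) (vd u (t, x))
      - 2 * (u t x * (starRingEnd ℂ) (vb u (t, x)) ^ 2)
      - 4 * ((starRingEnd ℂ) (u t x) * (starRingEnd ℂ) (vb u (t, x)) * vb u (t, x))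
      - 2 * ((starRingEnd ℂ) (u t x) * u t x * (starRingEnd ℂ) (vc u (t, x)))
      - (starRingEnd ℂ) (u t x) ^ 2 * vc u (t, x) := by
  rw [pde1 hsm heq t x]
  simp only [map_sub, map_mul, map_pow, map_ofNat, Complex.conj_I, Complex.conj_conj]

end

/-! ### Helpers for norm bounds -/

theorem nb {z w : ℂ} {p q : ℝ} (h1 : ‖z‖ ≤ p) (h2 : ‖w‖ ≤ q) : ‖z * w‖ ≤ p * q := by
  rw [norm_mul]; exact mul_le_mul h1 h2 (norm_nonneg _) ((norm_nonneg _).trans h1)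

theorem mono8 {Q nn : ℝ} (hQ : 1 ≤ Q) (hn0 : 0 ≤ nn) (hn1 : nn ≤ 1) {k : ℕ} (hk : 1 ≤ k)
    (hk8 : k ≤ 8) : (Q * nn) ^ k ≤ Q ^ 8 * nn := by
  rw [mul_pow]
  calc Q ^ k * nn ^ k ≤ Q ^ 8 * nn ^ 1 :=
        mul_le_mul (pow_le_pow_right₀ (by linarith) hk8)
          (pow_le_pow_of_le_one hn0 hn1 hk) (by positivity) (by positivity)
    _ = Q ^ 8 * nn := by ring

/-! ### The complexified energy density and its time derivative -/

theorem cxl (z w : ℂ) : ‖w‖ ^ 2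
    - (3 / 2) * ((‖z‖ : ℂ) ^ 2 * z * (starRingEnd ℂ) w).im + (1 / 2) * ‖z‖ ^ 6
    = (w * (starRingEnd ℂ) w
      + 3 / 4 * I * (z * (starRingEnd ℂ) z * z * (starRingEnd ℂ) w
          - (starRingEnd ℂ) z * z * (starRingEnd ℂ) z * w)
      + 1 / 2 * (z * (starRingEnd ℂ) z * (z * (starRingEnd ℂ) z)
          * (z * (starRingEnd ℂ) z))).re := by
  have hw2 : ‖w‖ ^ 2 = w.re * w.re + w.im * w.im := by
    rw [Complex.sq_norm, Complex.normSq_apply]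
  have hz6 : ‖z‖ ^ 6 = (z.re * z.re + z.im * z.im) ^ 3 := by
    rw [show (6:ℕ) = 2 * 3 by norm_num, pow_mul, Complex.sq_norm,
      Complex.normSq_apply]
  rw [hw2, hz6, normsq_complex]
  simp only [Complex.add_re, Complex.add_im, Complex.sub_re, Complex.sub_im, Complex.mul_re,
    Complex.mul_im, Complex.I_re, Complex.I_im, Complex.conj_re, Complex.conj_im,
    Complex.ofReal_re, Complex.ofReal_im, Complex.div_re, Complex.div_im, Complex.normSq_apply,
    Complex.re_ofNat, Complex.im_ofNat, Complex.one_re, Complex.one_im]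
  norm_num
  ring

noncomputable def Edens (u : ℝ → ℝ → ℂ) (s x : ℝ) : ℝ :=
  ‖deriv (u s) x‖ ^ 2
    - (3 / 2) * ((‖u s x‖ : ℂ) ^ 2 * u s x * (starRingEnd ℂ) (deriv (u s) x)).im
    + (1 / 2) * ‖u s x‖ ^ 6

noncomputable def CEp (u : ℝ → ℝ → ℂ) : ℝ × ℝ → ℂ := fun p =>
  vb u p * (starRingEnd ℂ) (vb u p)
    + 3 / 4 * I * (u p.1 p.2 * (starRingEnd ℂ) (u p.1 p.2) * u p.1 p.2 * (starRingEnd ℂ) (vb u p)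
        - (starRingEnd ℂ) (u p.1 p.2) * u p.1 p.2 * (starRingEnd ℂ) (u p.1 p.2) * vb u p)
    + 1 / 2 * (u p.1 p.2 * (starRingEnd ℂ) (u p.1 p.2)
        * (u p.1 p.2 * (starRingEnd ℂ) (u p.1 p.2)) * (u p.1 p.2 * (starRingEnd ℂ) (u p.1 p.2)))

noncomputable def Wp (u : ℝ → ℝ → ℂ) : ℝ × ℝ → ℂ := fun p =>
  vt1 u p * (starRingEnd ℂ) (vb u p) + vb u p * (starRingEnd ℂ) (vt1 u p)
    + 3 / 4 * I *
      (vt u p * (starRingEnd ℂ) (u p.1 p.2) * u p.1 p.2 * (starRingEnd ℂ) (vb u p)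
        + u p.1 p.2 * (starRingEnd ℂ) (vt u p) * u p.1 p.2 * (starRingEnd ℂ) (vb u p)
        + u p.1 p.2 * (starRingEnd ℂ) (u p.1 p.2) * vt u p * (starRingEnd ℂ) (vb u p)
        + u p.1 p.2 * (starRingEnd ℂ) (u p.1 p.2) * u p.1 p.2 * (starRingEnd ℂ) (vt1 u p)
        - ((starRingEnd ℂ) (vt u p) * u p.1 p.2 * (starRingEnd ℂ) (u p.1 p.2) * vb u p
          + (starRingEnd ℂ) (u p.1 p.2) * vt u p * (starRingEnd ℂ) (u p.1 p.2) * vb u p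
          + (starRingEnd ℂ) (u p.1 p.2) * u p.1 p.2 * (starRingEnd ℂ) (vt u p) * vb u p
          + (starRingEnd ℂ) (u p.1 p.2) * u p.1 p.2 * (starRingEnd ℂ) (u p.1 p.2) * vt1 u p))
    + 3 / 2 * (u p.1 p.2 * (starRingEnd ℂ) (u p.1 p.2) * (u p.1 p.2 * (starRingEnd ℂ) (u p.1 p.2)))
      * (vt u p * (starRingEnd ℂ) (u p.1 p.2) + u p.1 p.2 * (starRingEnd ℂ) (vt u p))

noncomputable def Gp (u : ℝ → ℝ → ℂ) : ℝ × ℝ → ℂ := fun p =>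
  I * (starRingEnd ℂ) (vb u p) * vc u p - I * vb u p * (starRingEnd ℂ) (vc u p)
    - 1 / 2 * ((starRingEnd ℂ) (u p.1 p.2) * (starRingEnd ℂ) (u p.1 p.2) * vb u p * vb u p)
    - 5 * (u p.1 p.2 * (starRingEnd ℂ) (u p.1 p.2) * vb u p * (starRingEnd ℂ) (vb u p))
    + 3 / 4 * (u p.1 p.2 * (starRingEnd ℂ) (u p.1 p.2) * (starRingEnd ℂ) (u p.1 p.2) * vc u p)
    + 3 / 4 * (u p.1 p.2 * u p.1 p.2 * (starRingEnd ℂ) (u p.1 p.2) * (starRingEnd ℂ) (vc u p))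
    - 1 / 2 * (u p.1 p.2 * u p.1 p.2 * (starRingEnd ℂ) (vb u p) * (starRingEnd ℂ) (vb u p))
    + 9 / 4 * I * (u p.1 p.2 * u p.1 p.2 * (starRingEnd ℂ) (u p.1 p.2)
        * (starRingEnd ℂ) (u p.1 p.2) * (starRingEnd ℂ) (u p.1 p.2) * vb u p)
    - 9 / 4 * I * (u p.1 p.2 * u p.1 p.2 * u p.1 p.2 * (starRingEnd ℂ) (u p.1 p.2)
        * (starRingEnd ℂ) (u p.1 p.2) * (starRingEnd ℂ) (vb u p))
    - 9 / 8 * (u p.1 p.2 * u p.1 p.2 * u p.1 p.2 * u p.1 p.2 * (starRingEnd ℂ) (u p.1 p.2)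
        * (starRingEnd ℂ) (u p.1 p.2) * (starRingEnd ℂ) (u p.1 p.2) * (starRingEnd ℂ) (u p.1 p.2))

noncomputable def Yp (u : ℝ → ℝ → ℂ) : ℝ × ℝ → ℂ := fun p =>
  (starRingEnd ℂ) (vb u p) * (vd u p) * Complex.I - (vb u p) * (starRingEnd ℂ) (vd u p) * Complex.I - 6 * (starRingEnd ℂ) (u p.1 p.2) * (vb u p) ^ 2 * (starRingEnd ℂ) (vb u p) - (1 / 4) * (starRingEnd ℂ) (u p.1 p.2) ^ 2 * (vb u p) * (vc u p) - 6 * (u p.1 p.2) * (vb u p) * (starRingEnd ℂ) (vb u p) ^ 2 - (7 / 2) * (u p.1 p.2) * (starRingEnd ℂ) (u p.1 p.2) * (starRingEnd ℂ) (vb u p) * (vc u p) - (7 / 2) * (u p.1 p.2) * (starRingEnd ℂ) (u p.1 p.2) * (vb u p) * (starRingEnd ℂ) (vc u p) + (3 / 4) * (u p.1 p.2) * (starRingEnd ℂ) (u p.1 p.2) ^ 2 * (vd u p) + (9 / 2) * (u p.1 p.2) * (starRingEnd ℂ) (u p.1 p.2) ^ 3 * (vb u p) ^ 2 * Complex.I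 - (1 / 4) * (u p.1 p.2) ^ 2 * (starRingEnd ℂ) (vb u p) * (starRingEnd ℂ) (vc u p) + (3 / 4) * (u p.1 p.2) ^ 2 * (starRingEnd ℂ) (u p.1 p.2) * (starRingEnd ℂ) (vd u p) + (9 / 4) * (u p.1 p.2) ^ 2 * (starRingEnd ℂ) (u p.1 p.2) ^ 3 * (vc u p) * Complex.I - (9 / 2) * (u p.1 p.2) ^ 3 * (starRingEnd ℂ) (u p.1 p.2) * (starRingEnd ℂ) (vb u p) ^ 2 * Complex.I - (9 / 4) * (u p.1 p.2) ^ 3 * (starRingEnd ℂ) (u p.1 p.2) ^ 2 * (starRingEnd ℂ) (vc u p) * Complex.I - (9 / 2) * (u p.1 p.2) ^ 3 * (starRingEnd ℂ) (u p.1 p.2) ^ 4 * (vb u p) - (9 / 2) * (u p.1 p.2) ^ 4 * (starRingEnd ℂ) (u p.1 p.2) ^ 3 * (starRingEnd ℂ) (vb u p)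

section
variable {u : ℝ → ℝ → ℂ} (hsm : ContDiff ℝ (⊤:ℕ∞) (fun q : ℝ × ℝ => u q.1 q.2))
include hsm

theorem EdensEq (s x : ℝ) : Edens u s x = (CEp u (s, x)).re := by
  simp only [Edens, CEp]
  rw [db hsm s x]
  exact cxl (u s x) (vb u (s, x))

theorem Hder (s x : ℝ) : HasDerivAt (fun r => Edens u r x) ((Wp u (s, x)).re) s := by
  have hfun : (fun r => Edens u r x) = fun r => (CEp u (r, x)).re :=
    funext fun r => EdensEq hsm r x
  rw [hfun]
  have Pa := Hat hsm s x
  have Pb := Hbt hsm s x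
  have H := ((Pb.mul Pb.star).add
      (((((Pa.mul Pa.star).mul Pa).mul Pb.star).sub
        (((Pa.star.mul Pa).mul Pa.star).mul Pb)).const_mul (3 / 4 * I))).add
      (((((Pa.mul Pa.star).mul (Pa.mul Pa.star))).mul (Pa.mul Pa.star)).const_mul (1 / 2))
  have H2 := Complex.reCLM.hasFDerivAt.comp_hasDerivAt s H
  refine H2.congr_deriv ?_
  symm
  simp only [Wp, Complex.reCLM_apply, starRingEnd_apply, Pi.mul_apply]
  exact congrArg _ (by ring)

theorem Hflux (t x : ℝ) : HasDerivAt (fun y => (Gp u (t, y)).re) ((Yp u (t, x)).re) x := by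
  have Pa := Hbx hsm t x
  have Pb := Hcx hsm t x
  have Pc := Hdx hsm t x
  have H := ((((((((((Pb.star.const_mul I).mul Pc).sub
      ((Pb.const_mul I).mul Pc.star)).sub
      ((((Pa.star.mul Pa.star).mul Pb).mul Pb).const_mul (1 / 2))).sub
      ((((Pa.mul Pa.star).mul Pb).mul Pb.star).const_mul 5)).add
      ((((Pa.mul Pa.star).mul Pa.star).mul Pc).const_mul (3 / 4))).add
      ((((Pa.mul Pa).mul Pa.star).mul Pc.star).const_mul (3 / 4))).sub
      ((((Pa.mul Pa).mul Pb.star).mul Pb.star).const_mul (1 / 2))).add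
      ((((((Pa.mul Pa).mul Pa.star).mul Pa.star).mul Pa.star).mul Pb).const_mul (9 / 4 * I))).sub
      ((((((Pa.mul Pa).mul Pa).mul Pa.star).mul Pa.star).mul Pb.star).const_mul (9 / 4 * I))).sub
      ((((((((Pa.mul Pa).mul Pa).mul Pa).mul Pa.star).mul Pa.star).mul Pa.star).mul Pa.star).const_mul (9 / 8))
  have H2 := Complex.reCLM.hasFDerivAt.comp_hasDerivAt x H
  refine H2.congr_deriv ?_
  symm
  simp only [Yp, Complex.reCLM_apply, starRingEnd_apply, Pi.mul_apply]
  exact congrArg _ (by ring)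

end


section
variable {u : ℝ → ℝ → ℂ} (hsm : ContDiff ℝ (⊤:ℕ∞) (fun q : ℝ × ℝ => u q.1 q.2))
  (heq : ∀ t x : ℝ,
    Complex.I * deriv (fun s => u s x) t + deriv (deriv (u t)) x
      = -Complex.I * deriv (fun y => (‖u t y‖ : ℂ) ^ 2 * u t y) x)
include hsm heq

theorem WYre (t x : ℝ) : (Wp u (t, x)).re = (Yp u (t, x)).re := by
  simp only [Wp, Yp]
  rw [pde0c hsm heq t x, pde1c hsm heq t x, pde0 hsm heq t x, pde1 hsm heq t x]
  exact congrArg Complex.re (by linear_combination (- (3 / 4) * (starRingEnd ℂ) (u t x) ^ 2 * (vb u (t, x)) * (vc u (t, x)) + (3 / 2) * (u t x) * (starRingEnd ℂ) (u t x) * (starRingEnd ℂ) (vb u (t, x)) * (vc u (t, x)) + (3 / 2) * (u t x) * (starRingEnd ℂ) (u t x) * (vb u (t, x)) * (starRingEnd ℂ) (vc u (t, x)) - (3 / 4) * (u t x) * (starRingEnd ℂ) (u t x) ^ 2 * (vd u (t, x)) - (3 / 4) * (u t x) ^ 2 * (starRingEnd ℂ) (vb u (t, x)) * (starRingEnd ℂ)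 (vc u (t, x)) - (3 / 4) * (u t x) ^ 2 * (starRingEnd ℂ) (u t x) * (starRingEnd ℂ) (vd u (t, x))) * Complex.I_sq)

end


section
variable {u : ℝ → ℝ → ℂ} (hsm : ContDiff ℝ (⊤:ℕ∞) (fun q : ℝ × ℝ => u q.1 q.2))
include hsm

omit hsm in
theorem it_a : ∀ s x : ℝ,
    iteratedDeriv 0 (fun r => iteratedDeriv 0 (fun y => u r y) x) s = u s x := by
  intro s x; simp [iteratedDeriv_zero]
theorem it_b : ∀ s x : ℝ,
    iteratedDeriv 0 (fun r => iteratedDeriv 1 (fun y => u r y) x) s = vb u (s, x) := by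
  intro s x; simp only [iteratedDeriv_zero, iteratedDeriv_one]; exact db hsm s x
theorem it_c : ∀ s x : ℝ,
    iteratedDeriv 0 (fun r => iteratedDeriv 2 (fun y => u r y) x) s = vc u (s, x) := by
  intro s x
  simp only [iteratedDeriv_zero, iteratedDeriv_succ, iteratedDeriv_zero]
  exact dc hsm s x
theorem it_d : ∀ s x : ℝ,
    iteratedDeriv 0 (fun r => iteratedDeriv 3 (fun y => u r y) x) s = vd u (s, x) := by
  intro s x
  simp only [iteratedDeriv_zero, iteratedDeriv_succ, iteratedDeriv_zero]
  exact dd3 hsm s x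
theorem it_T : ∀ s x : ℝ,
    iteratedDeriv 1 (fun r => iteratedDeriv 0 (fun y => u r y) x) s = vt u (s, x) := by
  intro s x; simp only [iteratedDeriv_zero, iteratedDeriv_one]; exact dt hsm s x
theorem it_U : ∀ s x : ℝ,
    iteratedDeriv 1 (fun r => iteratedDeriv 1 (fun y => u r y) x) s = vt1 u (s, x) := by
  intro s x; simp only [iteratedDeriv_zero, iteratedDeriv_one]; exact dt1 hsm s x

end

theorem decayOne {u : ℝ → ℝ → ℂ}
    (hdec : ∀ (i j k : ℕ) (K : Set ℝ), IsCompact K → ∃ C : ℝ, ∀ t ∈ K, ∀ x : ℝ,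
      |x| ^ k * ‖iteratedDeriv i (fun s => iteratedDeriv j (fun y => u s y) x) t‖ ≤ C)
    {i j : ℕ} {g : ℝ × ℝ → ℂ}
    (hg : ∀ s x : ℝ, iteratedDeriv i (fun r => iteratedDeriv j (fun y => u r y) x) s = g (s, x))
    {K : Set ℝ} (hK : IsCompact K) :
    ∃ C : ℝ, 0 ≤ C ∧ ∀ s ∈ K, ∀ x : ℝ, ‖g (s, x)‖ ≤ C * (1 + x ^ 2)⁻¹ := by
  obtain ⟨C0, h0⟩ := hdec i j 0 K hK
  obtain ⟨C2, h2⟩ := hdec i j 2 K hK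
  refine ⟨|C0| + |C2|, by positivity, ?_⟩
  intro s hs x
  have e0 := h0 s hs x
  have e2 := h2 s hs x
  rw [hg] at e0 e2
  rw [pow_zero, one_mul] at e0
  rw [_root_.sq_abs] at e2
  have hpos : (0:ℝ) < 1 + x ^ 2 := by positivity
  rw [show (|C0| + |C2|) * (1 + x ^ 2)⁻¹ = (|C0| + |C2|) / (1 + x ^ 2) from
    (div_eq_mul_inv _ _).symm, le_div_iff₀ hpos]
  nlinarith [norm_nonneg (g (s, x)), le_abs_self C0, le_abs_self C2, sq_nonneg x]


theorem boundW {u : ℝ → ℝ → ℂ} {Q nn : ℝ} (hQ : 1 ≤ Q) (hn0 : 0 ≤ nn) (hn1 : nn ≤ 1)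
    {s x : ℝ} (ha0 : ‖u s x‖ ≤ Q * nn) (hb0 : ‖vb u (s, x)‖ ≤ Q * nn) (hT0 : ‖vt u (s, x)‖ ≤ Q * nn) (hU0 : ‖vt1 u (s, x)‖ ≤ Q * nn) :
    ‖Wp u (s, x)‖ ≤ 11 * (Q ^ 8 * nn) := by
  have hA0 : ‖(starRingEnd ℂ) (u s x)‖ ≤ Q * nn := by rw [RCLike.norm_conj]; exact ha0
  have hB0 : ‖(starRingEnd ℂ) (vb u (s, x))‖ ≤ Q * nn := by rw [RCLike.norm_conj]; exact hb0
  have hS0 : ‖(starRingEnd ℂ) (vt u (s, x))‖ ≤ Q * nn := by rw [RCLike.norm_conj]; exact hT0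
  have hV0 : ‖(starRingEnd ℂ) (vt1 u (s, x))‖ ≤ Q * nn := by rw [RCLike.norm_conj]; exact hU0
  have hexp : Wp u (s, x) = (1 : ℂ) * ((starRingEnd ℂ) (vb u (s, x))) * (vt1 u (s, x)) + (1 : ℂ) * (vb u (s, x)) * ((starRingEnd ℂ) (vt1 u (s, x))) + ((-3 / 4 : ℂ) * Complex.I) * ((starRingEnd ℂ) (u s x)) * ((starRingEnd ℂ) (u s x)) * (vb u (s, x)) * (vt u (s, x)) + ((3 / 2 : ℂ) * Complex.I) * (u s x) * ((starRingEnd ℂ) (u s x)) * ((starRingEnd ℂ) (vb u (s, x))) * (vt u (s, x)) + ((-3 / 2 : ℂ) * Complex.I) * (u s x) * ((starRingEnd ℂ) (u s x)) * (vb u (s, x)) * ((starRingEnd ℂ) (vt u (s, x))) + ((-3 / 4 : ℂ) * Complex.I) * (u s x) * ((starRingEnd ℂ) (u s x)) * ((starRingEnd ℂ) (u s x)) * (vt1 u (s, x)) + ((3 / 4 : ℂ) * Complex.I) * (u s x) * (u s x) * ((starRingEnd ℂ) (vb u (s, x))) * ((starRingEnd ℂ) (vt u (s, x))) + ((3 /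 4 : ℂ) * Complex.I) * (u s x) * (u s x) * ((starRingEnd ℂ) (u s x)) * ((starRingEnd ℂ) (vt1 u (s, x))) + (3 / 2 : ℂ) * (u s x) * (u s x) * ((starRingEnd ℂ) (u s x)) * ((starRingEnd ℂ) (u s x)) * ((starRingEnd ℂ) (u s x)) * (vt u (s, x)) + (3 / 2 : ℂ) * (u s x) * (u s x) * (u s x) * ((starRingEnd ℂ) (u s x)) * ((starRingEnd ℂ) (u s x)) * ((starRingEnd ℂ) (vt u (s, x))) := by
    simp only [Wp]; ring
  rw [hexp]
  have hm0 : ‖(1 : ℂ) * ((starRingEnd ℂ) (vb u (s, x))) * (vt1 u (s, x))‖ ≤ 1 * (Q ^ 8 * nn) := by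
    refine le_trans (nb (nb (by norm_num : ‖(1 : ℂ)‖ ≤ 1) hB0) hU0) ?_
    rw [show (1 : ℝ) * (Q * nn) * (Q * nn) = 1 * (Q * nn) ^ 2 by ring]
    exact mul_le_mul_of_nonneg_left (mono8 hQ hn0 hn1 (by norm_num) (by norm_num)) (by norm_num)
  have hm1 : ‖(1 : ℂ) * (vb u (s, x)) * ((starRingEnd ℂ) (vt1 u (s, x)))‖ ≤ 1 * (Q ^ 8 * nn) := by
    refine le_trans (nb (nb (by norm_num : ‖(1 : ℂ)‖ ≤ 1) hb0) hV0) ?_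
    rw [show (1 : ℝ) * (Q * nn) * (Q * nn) = 1 * (Q * nn) ^ 2 by ring]
    exact mul_le_mul_of_nonneg_left (mono8 hQ hn0 hn1 (by norm_num) (by norm_num)) (by norm_num)
  have hm2 : ‖((-3 / 4 : ℂ) * Complex.I) * ((starRingEnd ℂ) (u s x)) * ((starRingEnd ℂ) (u s x)) * (vb u (s, x)) * (vt u (s, x))‖ ≤ (3 / 4) * (Q ^ 8 * nn) := by
    refine le_trans (nb (nb (nb (nb (by norm_num [norm_mul, Complex.norm_I] : ‖((-3 / 4 : ℂ) * Complex.I)‖ ≤ (3 / 4)) hA0) hA0) hb0) hT0) ?_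
    rw [show ((3 / 4) : ℝ) * (Q * nn) * (Q * nn) * (Q * nn) * (Q * nn) = (3 / 4) * (Q * nn) ^ 4 by ring]
    exact mul_le_mul_of_nonneg_left (mono8 hQ hn0 hn1 (by norm_num) (by norm_num)) (by norm_num)
  have hm3 : ‖((3 / 2 : ℂ) * Complex.I) * (u s x) * ((starRingEnd ℂ) (u s x)) * ((starRingEnd ℂ) (vb u (s, x))) * (vt u (s, x))‖ ≤ (3 / 2) * (Q ^ 8 * nn) := by
    refine le_trans (nb (nb (nb (nb (by norm_num [norm_mul, Complex.norm_I] : ‖((3 / 2 : ℂ) * Complex.I)‖ ≤ (3 / 2)) ha0) hA0) hB0) hT0) ?_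
    rw [show ((3 / 2) : ℝ) * (Q * nn) * (Q * nn) * (Q * nn) * (Q * nn) = (3 / 2) * (Q * nn) ^ 4 by ring]
    exact mul_le_mul_of_nonneg_left (mono8 hQ hn0 hn1 (by norm_num) (by norm_num)) (by norm_num)
  have hm4 : ‖((-3 / 2 : ℂ) * Complex.I) * (u s x) * ((starRingEnd ℂ) (u s x)) * (vb u (s, x)) * ((starRingEnd ℂ) (vt u (s, x)))‖ ≤ (3 / 2) * (Q ^ 8 * nn) := by
    refine le_trans (nb (nb (nb (nb (by norm_num [norm_mul, Complex.norm_I] : ‖((-3 / 2 : ℂ) * Complex.I)‖ ≤ (3 / 2)) ha0) hA0) hb0) hS0) ?_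
    rw [show ((3 / 2) : ℝ) * (Q * nn) * (Q * nn) * (Q * nn) * (Q * nn) = (3 / 2) * (Q * nn) ^ 4 by ring]
    exact mul_le_mul_of_nonneg_left (mono8 hQ hn0 hn1 (by norm_num) (by norm_num)) (by norm_num)
  have hm5 : ‖((-3 / 4 : ℂ) * Complex.I) * (u s x) * ((starRingEnd ℂ) (u s x)) * ((starRingEnd ℂ) (u s x)) * (vt1 u (s, x))‖ ≤ (3 / 4) * (Q ^ 8 * nn) := by
    refine le_trans (nb (nb (nb (nb (by norm_num [norm_mul, Complex.norm_I] : ‖((-3 / 4 : ℂ) * Complex.I)‖ ≤ (3 / 4)) ha0) hA0) hA0) hU0) ?_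
    rw [show ((3 / 4) : ℝ) * (Q * nn) * (Q * nn) * (Q * nn) * (Q * nn) = (3 / 4) * (Q * nn) ^ 4 by ring]
    exact mul_le_mul_of_nonneg_left (mono8 hQ hn0 hn1 (by norm_num) (by norm_num)) (by norm_num)
  have hm6 : ‖((3 / 4 : ℂ) * Complex.I) * (u s x) * (u s x) * ((starRingEnd ℂ) (vb u (s, x))) * ((starRingEnd ℂ) (vt u (s, x)))‖ ≤ (3 / 4) * (Q ^ 8 * nn) := by
    refine le_trans (nb (nb (nb (nb (by norm_num [norm_mul, Complex.norm_I] : ‖((3 / 4 : ℂ) * Complex.I)‖ ≤ (3 / 4)) ha0) ha0) hB0) hS0) ?_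
    rw [show ((3 / 4) : ℝ) * (Q * nn) * (Q * nn) * (Q * nn) * (Q * nn) = (3 / 4) * (Q * nn) ^ 4 by ring]
    exact mul_le_mul_of_nonneg_left (mono8 hQ hn0 hn1 (by norm_num) (by norm_num)) (by norm_num)
  have hm7 : ‖((3 / 4 : ℂ) * Complex.I) * (u s x) * (u s x) * ((starRingEnd ℂ) (u s x)) * ((starRingEnd ℂ) (vt1 u (s, x)))‖ ≤ (3 / 4) * (Q ^ 8 * nn) := by
    refine le_trans (nb (nb (nb (nb (by norm_num [norm_mul, Complex.norm_I] : ‖((3 / 4 : ℂ) * Complex.I)‖ ≤ (3 / 4)) ha0) ha0) hA0) hV0) ?_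
    rw [show ((3 / 4) : ℝ) * (Q * nn) * (Q * nn) * (Q * nn) * (Q * nn) = (3 / 4) * (Q * nn) ^ 4 by ring]
    exact mul_le_mul_of_nonneg_left (mono8 hQ hn0 hn1 (by norm_num) (by norm_num)) (by norm_num)
  have hm8 : ‖(3 / 2 : ℂ) * (u s x) * (u s x) * ((starRingEnd ℂ) (u s x)) * ((starRingEnd ℂ) (u s x)) * ((starRingEnd ℂ) (u s x)) * (vt u (s, x))‖ ≤ (3 / 2) * (Q ^ 8 * nn) := by
    refine le_trans (nb (nb (nb (nb (nb (nb (by norm_num : ‖(3 / 2 : ℂ)‖ ≤ (3 / 2)) ha0) ha0) hA0) hA0) hA0) hT0) ?_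
    rw [show ((3 / 2) : ℝ) * (Q * nn) * (Q * nn) * (Q * nn) * (Q * nn) * (Q * nn) * (Q * nn) = (3 / 2) * (Q * nn) ^ 6 by ring]
    exact mul_le_mul_of_nonneg_left (mono8 hQ hn0 hn1 (by norm_num) (by norm_num)) (by norm_num)
  have hm9 : ‖(3 / 2 : ℂ) * (u s x) * (u s x) * (u s x) * ((starRingEnd ℂ) (u s x)) * ((starRingEnd ℂ) (u s x)) * ((starRingEnd ℂ) (vt u (s, x)))‖ ≤ (3 / 2) * (Q ^ 8 * nn) := by
    refine le_trans (nb (nb (nb (nb (nb (nb (by norm_num : ‖(3 / 2 : ℂ)‖ ≤ (3 / 2)) ha0) ha0) ha0) hA0) hA0) hS0) ?_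
    rw [show ((3 / 2) : ℝ) * (Q * nn) * (Q * nn) * (Q * nn) * (Q * nn) * (Q * nn) * (Q * nn) = (3 / 2) * (Q * nn) ^ 6 by ring]
    exact mul_le_mul_of_nonneg_left (mono8 hQ hn0 hn1 (by norm_num) (by norm_num)) (by norm_num)
  refine le_trans (le_trans (norm_add_le _ _) (add_le_add (le_trans (norm_add_le _ _) (add_le_add (le_trans (norm_add_le _ _) (add_le_add (le_trans (norm_add_le _ _) (add_le_add (le_trans (norm_add_le _ _) (add_le_add (le_trans (norm_add_le _ _) (add_le_add (le_trans (norm_add_le _ _) (add_le_add (le_trans (norm_add_le _ _) (add_le_add (le_trans (norm_add_le _ _) (add_le_add hm0 hm1)) hm2)) hm3)) hm4)) hm5)) hm6)) hm7)) hm8)) hm9)) (le_of_eq ?_)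
  ring

theorem boundCE {u : ℝ → ℝ → ℂ} {Q nn : ℝ} (hQ : 1 ≤ Q) (hn0 : 0 ≤ nn) (hn1 : nn ≤ 1)
    {s x : ℝ} (ha0 : ‖u s x‖ ≤ Q * nn) (hb0 : ‖vb u (s, x)‖ ≤ Q * nn) :
    ‖CEp u (s, x)‖ ≤ 3 * (Q ^ 8 * nn) := by
  have hA0 : ‖(starRingEnd ℂ) (u s x)‖ ≤ Q * nn := by rw [RCLike.norm_conj]; exact ha0
  have hB0 : ‖(starRingEnd ℂ) (vb u (s, x))‖ ≤ Q * nn := by rw [RCLike.norm_conj]; exact hb0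
  have hexp : CEp u (s, x) = (1 : ℂ) * (vb u (s, x)) * ((starRingEnd ℂ) (vb u (s, x))) + ((-3 / 4 : ℂ) * Complex.I) * (u s x) * ((starRingEnd ℂ) (u s x)) * ((starRingEnd ℂ) (u s x)) * (vb u (s, x)) + ((3 / 4 : ℂ) * Complex.I) * (u s x) * (u s x) * ((starRingEnd ℂ) (u s x)) * ((starRingEnd ℂ) (vb u (s, x))) + (1 / 2 : ℂ) * (u s x) * (u s x) * (u s x) * ((starRingEnd ℂ) (u s x)) * ((starRingEnd ℂ) (u s x)) * ((starRingEnd ℂ) (u s x)) := by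
    simp only [CEp]; ring
  rw [hexp]
  have hm0 : ‖(1 : ℂ) * (vb u (s, x)) * ((starRingEnd ℂ) (vb u (s, x)))‖ ≤ 1 * (Q ^ 8 * nn) := by
    refine le_trans (nb (nb (by norm_num : ‖(1 : ℂ)‖ ≤ 1) hb0) hB0) ?_
    rw [show (1 : ℝ) * (Q * nn) * (Q * nn) = 1 * (Q * nn) ^ 2 by ring]
    exact mul_le_mul_of_nonneg_left (mono8 hQ hn0 hn1 (by norm_num) (by norm_num)) (by norm_num)
  have hm1 : ‖((-3 / 4 : ℂ) * Complex.I) * (u s x) * ((starRingEnd ℂ) (u s x)) * ((starRingEnd ℂ) (u s x)) * (vb u (s, x))‖ ≤ (3 / 4) * (Q ^ 8 * nn) := by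
    refine le_trans (nb (nb (nb (nb (by norm_num [norm_mul, Complex.norm_I] : ‖((-3 / 4 : ℂ) * Complex.I)‖ ≤ (3 / 4)) ha0) hA0) hA0) hb0) ?_
    rw [show ((3 / 4) : ℝ) * (Q * nn) * (Q * nn) * (Q * nn) * (Q * nn) = (3 / 4) * (Q * nn) ^ 4 by ring]
    exact mul_le_mul_of_nonneg_left (mono8 hQ hn0 hn1 (by norm_num) (by norm_num)) (by norm_num)
  have hm2 : ‖((3 / 4 : ℂ) * Complex.I) * (u s x) * (u s x) * ((starRingEnd ℂ) (u s x)) * ((starRingEnd ℂ) (vb u (s, x)))‖ ≤ (3 / 4) * (Q ^ 8 * nn) := by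
    refine le_trans (nb (nb (nb (nb (by norm_num [norm_mul, Complex.norm_I] : ‖((3 / 4 : ℂ) * Complex.I)‖ ≤ (3 / 4)) ha0) ha0) hA0) hB0) ?_
    rw [show ((3 / 4) : ℝ) * (Q * nn) * (Q * nn) * (Q * nn) * (Q * nn) = (3 / 4) * (Q * nn) ^ 4 by ring]
    exact mul_le_mul_of_nonneg_left (mono8 hQ hn0 hn1 (by norm_num) (by norm_num)) (by norm_num)
  have hm3 : ‖(1 / 2 : ℂ) * (u s x) * (u s x) * (u s x) * ((starRingEnd ℂ) (u s x)) * ((starRingEnd ℂ) (u s x)) * ((starRingEnd ℂ) (u s x))‖ ≤ (1 / 2) * (Q ^ 8 * nn) := by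
    refine le_trans (nb (nb (nb (nb (nb (nb (by norm_num : ‖(1 / 2 : ℂ)‖ ≤ (1 / 2)) ha0) ha0) ha0) hA0) hA0) hA0) ?_
    rw [show ((1 / 2) : ℝ) * (Q * nn) * (Q * nn) * (Q * nn) * (Q * nn) * (Q * nn) * (Q * nn) = (1 / 2) * (Q * nn) ^ 6 by ring]
    exact mul_le_mul_of_nonneg_left (mono8 hQ hn0 hn1 (by norm_num) (by norm_num)) (by norm_num)
  refine le_trans (le_trans (norm_add_le _ _) (add_le_add (le_trans (norm_add_le _ _) (add_le_add (le_trans (norm_add_le _ _) (add_le_add hm0 hm1)) hm2)) hm3)) (le_of_eq ?_)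
  ring

theorem boundG {u : ℝ → ℝ → ℂ} {Q nn : ℝ} (hQ : 1 ≤ Q) (hn0 : 0 ≤ nn) (hn1 : nn ≤ 1)
    {s x : ℝ} (ha0 : ‖u s x‖ ≤ Q * nn) (hb0 : ‖vb u (s, x)‖ ≤ Q * nn) (hc0 : ‖vc u (s, x)‖ ≤ Q * nn) :
    ‖Gp u (s, x)‖ ≤ (121 / 8) * (Q ^ 8 * nn) := by
  have hA0 : ‖(starRingEnd ℂ) (u s x)‖ ≤ Q * nn := by rw [RCLike.norm_conj]; exact ha0
  have hB0 : ‖(starRingEnd ℂ) (vb u (s, x))‖ ≤ Q * nn := by rw [RCLike.norm_conj]; exact hb0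
  have hC0 : ‖(starRingEnd ℂ) (vc u (s, x))‖ ≤ Q * nn := by rw [RCLike.norm_conj]; exact hc0
  have hexp : Gp u (s, x) = ((1 : ℂ) * Complex.I) * ((starRingEnd ℂ) (vb u (s, x))) * (vc u (s, x)) + ((-1 : ℂ) * Complex.I) * (vb u (s, x)) * ((starRingEnd ℂ) (vc u (s, x))) + (-1 / 2 : ℂ) * ((starRingEnd ℂ) (u s x)) * ((starRingEnd ℂ) (u s x)) * (vb u (s, x)) * (vb u (s, x)) + (-5 : ℂ) * (u s x) * ((starRingEnd ℂ) (u s x)) * (vb u (s, x)) * ((starRingEnd ℂ) (vb u (s, x))) + (3 / 4 : ℂ) * (u s x) * ((starRingEnd ℂ) (u s x)) * ((starRingEnd ℂ) (u s x)) * (vc u (s, x)) + (-1 / 2 : ℂ) * (u s x) * (u s x) * ((starRingEnd ℂ) (vb u (s, x))) * ((starRingEnd ℂ) (vb u (s, x))) + (3 / 4 : ℂ) * (u s x) * (u s x) * ((starRingEnd ℂ) (u s x)) * ((starRingEnd ℂ) (vc u (s, x))) + ((9 / 4 : ℂ) * Complex.I) * (u s x) * (u s x) * ((starRingEnd ℂ)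 (u s x)) * ((starRingEnd ℂ) (u s x)) * ((starRingEnd ℂ) (u s x)) * (vb u (s, x)) + ((-9 / 4 : ℂ) * Complex.I) * (u s x) * (u s x) * (u s x) * ((starRingEnd ℂ) (u s x)) * ((starRingEnd ℂ) (u s x)) * ((starRingEnd ℂ) (vb u (s, x))) + (-9 / 8 : ℂ) * (u s x) * (u s x) * (u s x) * (u s x) * ((starRingEnd ℂ) (u s x)) * ((starRingEnd ℂ) (u s x)) * ((starRingEnd ℂ) (u s x)) * ((starRingEnd ℂ) (u s x)) := by
    simp only [Gp]; ring
  rw [hexp]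
  have hm0 : ‖((1 : ℂ) * Complex.I) * ((starRingEnd ℂ) (vb u (s, x))) * (vc u (s, x))‖ ≤ 1 * (Q ^ 8 * nn) := by
    refine le_trans (nb (nb (by norm_num [norm_mul, Complex.norm_I] : ‖((1 : ℂ) * Complex.I)‖ ≤ 1) hB0) hc0) ?_
    rw [show (1 : ℝ) * (Q * nn) * (Q * nn) = 1 * (Q * nn) ^ 2 by ring]
    exact mul_le_mul_of_nonneg_left (mono8 hQ hn0 hn1 (by norm_num) (by norm_num)) (by norm_num)
  have hm1 : ‖((-1 : ℂ) * Complex.I) * (vb u (s, x)) * ((starRingEnd ℂ) (vc u (s, x)))‖ ≤ 1 * (Q ^ 8 * nn) := by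
    refine le_trans (nb (nb (by norm_num [norm_mul, Complex.norm_I] : ‖((-1 : ℂ) * Complex.I)‖ ≤ 1) hb0) hC0) ?_
    rw [show (1 : ℝ) * (Q * nn) * (Q * nn) = 1 * (Q * nn) ^ 2 by ring]
    exact mul_le_mul_of_nonneg_left (mono8 hQ hn0 hn1 (by norm_num) (by norm_num)) (by norm_num)
  have hm2 : ‖(-1 / 2 : ℂ) * ((starRingEnd ℂ) (u s x)) * ((starRingEnd ℂ) (u s x)) * (vb u (s, x)) * (vb u (s, x))‖ ≤ (1 / 2) * (Q ^ 8 * nn) := by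
    refine le_trans (nb (nb (nb (nb (by norm_num : ‖(-1 / 2 : ℂ)‖ ≤ (1 / 2)) hA0) hA0) hb0) hb0) ?_
    rw [show ((1 / 2) : ℝ) * (Q * nn) * (Q * nn) * (Q * nn) * (Q * nn) = (1 / 2) * (Q * nn) ^ 4 by ring]
    exact mul_le_mul_of_nonneg_left (mono8 hQ hn0 hn1 (by norm_num) (by norm_num)) (by norm_num)
  have hm3 : ‖(-5 : ℂ) * (u s x) * ((starRingEnd ℂ) (u s x)) * (vb u (s, x)) * ((starRingEnd ℂ) (vb u (s, x)))‖ ≤ 5 * (Q ^ 8 * nn) := by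
    refine le_trans (nb (nb (nb (nb (by norm_num : ‖(-5 : ℂ)‖ ≤ 5) ha0) hA0) hb0) hB0) ?_
    rw [show (5 : ℝ) * (Q * nn) * (Q * nn) * (Q * nn) * (Q * nn) = 5 * (Q * nn) ^ 4 by ring]
    exact mul_le_mul_of_nonneg_left (mono8 hQ hn0 hn1 (by norm_num) (by norm_num)) (by norm_num)
  have hm4 : ‖(3 / 4 : ℂ) * (u s x) * ((starRingEnd ℂ) (u s x)) * ((starRingEnd ℂ) (u s x)) * (vc u (s, x))‖ ≤ (3 / 4) * (Q ^ 8 * nn) := by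
    refine le_trans (nb (nb (nb (nb (by norm_num : ‖(3 / 4 : ℂ)‖ ≤ (3 / 4)) ha0) hA0) hA0) hc0) ?_
    rw [show ((3 / 4) : ℝ) * (Q * nn) * (Q * nn) * (Q * nn) * (Q * nn) = (3 / 4) * (Q * nn) ^ 4 by ring]
    exact mul_le_mul_of_nonneg_left (mono8 hQ hn0 hn1 (by norm_num) (by norm_num)) (by norm_num)
  have hm5 : ‖(-1 / 2 : ℂ) * (u s x) * (u s x) * ((starRingEnd ℂ) (vb u (s, x))) * ((starRingEnd ℂ) (vb u (s, x)))‖ ≤ (1 / 2) * (Q ^ 8 * nn) := by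
    refine le_trans (nb (nb (nb (nb (by norm_num : ‖(-1 / 2 : ℂ)‖ ≤ (1 / 2)) ha0) ha0) hB0) hB0) ?_
    rw [show ((1 / 2) : ℝ) * (Q * nn) * (Q * nn) * (Q * nn) * (Q * nn) = (1 / 2) * (Q * nn) ^ 4 by ring]
    exact mul_le_mul_of_nonneg_left (mono8 hQ hn0 hn1 (by norm_num) (by norm_num)) (by norm_num)
  have hm6 : ‖(3 / 4 : ℂ) * (u s x) * (u s x) * ((starRingEnd ℂ) (u s x)) * ((starRingEnd ℂ) (vc u (s, x)))‖ ≤ (3 / 4) * (Q ^ 8 * nn) := by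
    refine le_trans (nb (nb (nb (nb (by norm_num : ‖(3 / 4 : ℂ)‖ ≤ (3 / 4)) ha0) ha0) hA0) hC0) ?_
    rw [show ((3 / 4) : ℝ) * (Q * nn) * (Q * nn) * (Q * nn) * (Q * nn) = (3 / 4) * (Q * nn) ^ 4 by ring]
    exact mul_le_mul_of_nonneg_left (mono8 hQ hn0 hn1 (by norm_num) (by norm_num)) (by norm_num)
  have hm7 : ‖((9 / 4 : ℂ) * Complex.I) * (u s x) * (u s x) * ((starRingEnd ℂ) (u s x)) * ((starRingEnd ℂ) (u s x)) * ((starRingEnd ℂ) (u s x)) * (vb u (s, x))‖ ≤ (9 / 4) * (Q ^ 8 * nn) := by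
    refine le_trans (nb (nb (nb (nb (nb (nb (by norm_num [norm_mul, Complex.norm_I] : ‖((9 / 4 : ℂ) * Complex.I)‖ ≤ (9 / 4)) ha0) ha0) hA0) hA0) hA0) hb0) ?_
    rw [show ((9 / 4) : ℝ) * (Q * nn) * (Q * nn) * (Q * nn) * (Q * nn) * (Q * nn) * (Q * nn) = (9 / 4) * (Q * nn) ^ 6 by ring]
    exact mul_le_mul_of_nonneg_left (mono8 hQ hn0 hn1 (by norm_num) (by norm_num)) (by norm_num)
  have hm8 : ‖((-9 / 4 : ℂ) * Complex.I) * (u s x) * (u s x) * (u s x) * ((starRingEnd ℂ) (u s x)) * ((starRingEnd ℂ) (u s x)) * ((starRingEnd ℂ) (vb u (s, x)))‖ ≤ (9 / 4) * (Q ^ 8 * nn) := by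
    refine le_trans (nb (nb (nb (nb (nb (nb (by norm_num [norm_mul, Complex.norm_I] : ‖((-9 / 4 : ℂ) * Complex.I)‖ ≤ (9 / 4)) ha0) ha0) ha0) hA0) hA0) hB0) ?_
    rw [show ((9 / 4) : ℝ) * (Q * nn) * (Q * nn) * (Q * nn) * (Q * nn) * (Q * nn) * (Q * nn) = (9 / 4) * (Q * nn) ^ 6 by ring]
    exact mul_le_mul_of_nonneg_left (mono8 hQ hn0 hn1 (by norm_num) (by norm_num)) (by norm_num)
  have hm9 : ‖(-9 / 8 : ℂ) * (u s x) * (u s x) * (u s x) * (u s x) * ((starRingEnd ℂ) (u s x)) * ((starRingEnd ℂ) (u s x)) * ((starRingEnd ℂ) (u s x)) * ((starRingEnd ℂ) (u s x))‖ ≤ (9 / 8) * (Q ^ 8 * nn) := by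
    refine le_trans (nb (nb (nb (nb (nb (nb (nb (nb (by norm_num : ‖(-9 / 8 : ℂ)‖ ≤ (9 / 8)) ha0) ha0) ha0) ha0) hA0) hA0) hA0) hA0) ?_
    rw [show ((9 / 8) : ℝ) * (Q * nn) * (Q * nn) * (Q * nn) * (Q * nn) * (Q * nn) * (Q * nn) * (Q * nn) * (Q * nn) = (9 / 8) * (Q * nn) ^ 8 by ring]
    exact mul_le_mul_of_nonneg_left (mono8 hQ hn0 hn1 (by norm_num) (by norm_num)) (by norm_num)
  refine le_trans (le_trans (norm_add_le _ _) (add_le_add (le_trans (norm_add_le _ _) (add_le_add (le_trans (norm_add_le _ _) (add_le_add (le_trans (norm_add_le _ _) (add_le_add (le_trans (norm_add_le _ _) (add_le_add (le_trans (norm_add_le _ _) (add_le_add (le_trans (norm_add_le _ _) (add_le_add (le_trans (norm_add_le _ _) (add_le_add (le_trans (norm_add_le _ _) (add_le_add hm0 hm1)) hm2)) hm3)) hm4)) hm5)) hm6)) hm7)) hm8)) hm9)) (le_of_eq ?_)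
  ring

theorem boundY {u : ℝ → ℝ → ℂ} {Q nn : ℝ} (hQ : 1 ≤ Q) (hn0 : 0 ≤ nn) (hn1 : nn ≤ 1)
    {s x : ℝ} (ha0 : ‖u s x‖ ≤ Q * nn) (hb0 : ‖vb u (s, x)‖ ≤ Q * nn) (hc0 : ‖vc u (s, x)‖ ≤ Q * nn) (hd0 : ‖vd u (s, x)‖ ≤ Q * nn) :
    ‖Yp u (s, x)‖ ≤ (91 / 2) * (Q ^ 8 * nn) := by
  have hA0 : ‖(starRingEnd ℂ) (u s x)‖ ≤ Q * nn := by rw [RCLike.norm_conj]; exact ha0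
  have hB0 : ‖(starRingEnd ℂ) (vb u (s, x))‖ ≤ Q * nn := by rw [RCLike.norm_conj]; exact hb0
  have hC0 : ‖(starRingEnd ℂ) (vc u (s, x))‖ ≤ Q * nn := by rw [RCLike.norm_conj]; exact hc0
  have hD0 : ‖(starRingEnd ℂ) (vd u (s, x))‖ ≤ Q * nn := by rw [RCLike.norm_conj]; exact hd0
  have hexp : Yp u (s, x) = ((1 : ℂ) * Complex.I) * ((starRingEnd ℂ) (vb u (s, x))) * (vd u (s, x)) + ((-1 : ℂ) * Complex.I) * (vb u (s, x)) * ((starRingEnd ℂ) (vd u (s, x))) + (-6 : ℂ) * ((starRingEnd ℂ) (u s x)) * (vb u (s, x)) * (vb u (s, x)) * ((starRingEnd ℂ) (vb u (s, x))) + (-1 / 4 : ℂ) * ((starRingEnd ℂ) (u s x)) * ((starRingEnd ℂ) (u s x)) * (vb u (s, x)) * (vc u (s, x)) + (-6 : ℂ) * (u s x) * (vb u (s, x)) * ((starRingEnd ℂ) (vb u (s, x))) * ((starRingEnd ℂ) (vb u (s, x))) + (-7 / 2 : ℂ) * (u s x) * ((starRingEnd ℂ) (u s x)) * ((starRingEnd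 ℂ) (vb u (s, x))) * (vc u (s, x)) + (-7 / 2 : ℂ) * (u s x) * ((starRingEnd ℂ) (u s x)) * (vb u (s, x)) * ((starRingEnd ℂ) (vc u (s, x))) + (3 / 4 : ℂ) * (u s x) * ((starRingEnd ℂ) (u s x)) * ((starRingEnd ℂ) (u s x)) * (vd u (s, x)) + ((9 / 2 : ℂ) * Complex.I) * (u s x) * ((starRingEnd ℂ) (u s x)) * ((starRingEnd ℂ) (u s x)) * ((starRingEnd ℂ) (u s x)) * (vb u (s, x)) * (vb u (s, x)) + (-1 / 4 : ℂ) * (u s x) * (u s x) * ((starRingEnd ℂ) (vb u (s, x))) * ((starRingEnd ℂ) (vc u (s, x))) + (3 / 4 : ℂ) * (u s x) * (u s x) * ((starRingEnd ℂ) (u s x)) * ((starRingEnd ℂ) (vd u (s, x))) + ((9 / 4 : ℂ) * Complex.I) * (u s x) * (u s x) * ((starRingEnd ℂ) (u s x)) * ((starRingEnd ℂ) (u s x)) * ((starRingEnd ℂ) (u s x)) * (vc u (s, x)) + ((-9 / 2 : ℂ) * Complex.I) * (u s x) * (u s x) * (u s x) * ((starRingEnd ℂ) (u s x)) * ((starRingEnd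 ℂ) (vb u (s, x))) * ((starRingEnd ℂ) (vb u (s, x))) + ((-9 / 4 : ℂ) * Complex.I) * (u s x) * (u s x) * (u s x) * ((starRingEnd ℂ) (u s x)) * ((starRingEnd ℂ) (u s x)) * ((starRingEnd ℂ) (vc u (s, x))) + (-9 / 2 : ℂ) * (u s x) * (u s x) * (u s x) * ((starRingEnd ℂ) (u s x)) * ((starRingEnd ℂ) (u s x)) * ((starRingEnd ℂ) (u s x)) * ((starRingEnd ℂ) (u s x)) * (vb u (s, x)) + (-9 / 2 : ℂ) * (u s x) * (u s x) * (u s x) * (u s x) * ((starRingEnd ℂ) (u s x)) * ((starRingEnd ℂ) (u s x)) * ((starRingEnd ℂ) (u s x)) * ((starRingEnd ℂ) (vb u (s, x))) := by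
    simp only [Yp]; ring
  rw [hexp]
  have hm0 : ‖((1 : ℂ) * Complex.I) * ((starRingEnd ℂ) (vb u (s, x))) * (vd u (s, x))‖ ≤ 1 * (Q ^ 8 * nn) := by
    refine le_trans (nb (nb (by norm_num [norm_mul, Complex.norm_I] : ‖((1 : ℂ) * Complex.I)‖ ≤ 1) hB0) hd0) ?_
    rw [show (1 : ℝ) * (Q * nn) * (Q * nn) = 1 * (Q * nn) ^ 2 by ring]
    exact mul_le_mul_of_nonneg_left (mono8 hQ hn0 hn1 (by norm_num) (by norm_num)) (by norm_num)
  have hm1 : ‖((-1 : ℂ) * Complex.I) * (vb u (s, x)) * ((starRingEnd ℂ) (vd u (s, x)))‖ ≤ 1 * (Q ^ 8 * nn) := by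
    refine le_trans (nb (nb (by norm_num [norm_mul, Complex.norm_I] : ‖((-1 : ℂ) * Complex.I)‖ ≤ 1) hb0) hD0) ?_
    rw [show (1 : ℝ) * (Q * nn) * (Q * nn) = 1 * (Q * nn) ^ 2 by ring]
    exact mul_le_mul_of_nonneg_left (mono8 hQ hn0 hn1 (by norm_num) (by norm_num)) (by norm_num)
  have hm2 : ‖(-6 : ℂ) * ((starRingEnd ℂ) (u s x)) * (vb u (s, x)) * (vb u (s, x)) * ((starRingEnd ℂ) (vb u (s, x)))‖ ≤ 6 * (Q ^ 8 * nn) := by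
    refine le_trans (nb (nb (nb (nb (by norm_num : ‖(-6 : ℂ)‖ ≤ 6) hA0) hb0) hb0) hB0) ?_
    rw [show (6 : ℝ) * (Q * nn) * (Q * nn) * (Q * nn) * (Q * nn) = 6 * (Q * nn) ^ 4 by ring]
    exact mul_le_mul_of_nonneg_left (mono8 hQ hn0 hn1 (by norm_num) (by norm_num)) (by norm_num)
  have hm3 : ‖(-1 / 4 : ℂ) * ((starRingEnd ℂ) (u s x)) * ((starRingEnd ℂ) (u s x)) * (vb u (s, x)) * (vc u (s, x))‖ ≤ (1 / 4) * (Q ^ 8 * nn) := by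
    refine le_trans (nb (nb (nb (nb (by norm_num : ‖(-1 / 4 : ℂ)‖ ≤ (1 / 4)) hA0) hA0) hb0) hc0) ?_
    rw [show ((1 / 4) : ℝ) * (Q * nn) * (Q * nn) * (Q * nn) * (Q * nn) = (1 / 4) * (Q * nn) ^ 4 by ring]
    exact mul_le_mul_of_nonneg_left (mono8 hQ hn0 hn1 (by norm_num) (by norm_num)) (by norm_num)
  have hm4 : ‖(-6 : ℂ) * (u s x) * (vb u (s, x)) * ((starRingEnd ℂ) (vb u (s, x))) * ((starRingEnd ℂ) (vb u (s, x)))‖ ≤ 6 * (Q ^ 8 * nn) := by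
    refine le_trans (nb (nb (nb (nb (by norm_num : ‖(-6 : ℂ)‖ ≤ 6) ha0) hb0) hB0) hB0) ?_
    rw [show (6 : ℝ) * (Q * nn) * (Q * nn) * (Q * nn) * (Q * nn) = 6 * (Q * nn) ^ 4 by ring]
    exact mul_le_mul_of_nonneg_left (mono8 hQ hn0 hn1 (by norm_num) (by norm_num)) (by norm_num)
  have hm5 : ‖(-7 / 2 : ℂ) * (u s x) * ((starRingEnd ℂ) (u s x)) * ((starRingEnd ℂ) (vb u (s, x))) * (vc u (s, x))‖ ≤ (7 / 2) * (Q ^ 8 * nn) := by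
    refine le_trans (nb (nb (nb (nb (by norm_num : ‖(-7 / 2 : ℂ)‖ ≤ (7 / 2)) ha0) hA0) hB0) hc0) ?_
    rw [show ((7 / 2) : ℝ) * (Q * nn) * (Q * nn) * (Q * nn) * (Q * nn) = (7 / 2) * (Q * nn) ^ 4 by ring]
    exact mul_le_mul_of_nonneg_left (mono8 hQ hn0 hn1 (by norm_num) (by norm_num)) (by norm_num)
  have hm6 : ‖(-7 / 2 : ℂ) * (u s x) * ((starRingEnd ℂ) (u s x)) * (vb u (s, x)) * ((starRingEnd ℂ) (vc u (s, x)))‖ ≤ (7 / 2) * (Q ^ 8 * nn) := by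
    refine le_trans (nb (nb (nb (nb (by norm_num : ‖(-7 / 2 : ℂ)‖ ≤ (7 / 2)) ha0) hA0) hb0) hC0) ?_
    rw [show ((7 / 2) : ℝ) * (Q * nn) * (Q * nn) * (Q * nn) * (Q * nn) = (7 / 2) * (Q * nn) ^ 4 by ring]
    exact mul_le_mul_of_nonneg_left (mono8 hQ hn0 hn1 (by norm_num) (by norm_num)) (by norm_num)
  have hm7 : ‖(3 / 4 : ℂ) * (u s x) * ((starRingEnd ℂ) (u s x)) * ((starRingEnd ℂ) (u s x)) * (vd u (s, x))‖ ≤ (3 / 4) * (Q ^ 8 * nn) := by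
    refine le_trans (nb (nb (nb (nb (by norm_num : ‖(3 / 4 : ℂ)‖ ≤ (3 / 4)) ha0) hA0) hA0) hd0) ?_
    rw [show ((3 / 4) : ℝ) * (Q * nn) * (Q * nn) * (Q * nn) * (Q * nn) = (3 / 4) * (Q * nn) ^ 4 by ring]
    exact mul_le_mul_of_nonneg_left (mono8 hQ hn0 hn1 (by norm_num) (by norm_num)) (by norm_num)
  have hm8 : ‖((9 / 2 : ℂ) * Complex.I) * (u s x) * ((starRingEnd ℂ) (u s x)) * ((starRingEnd ℂ) (u s x)) * ((starRingEnd ℂ) (u s x)) * (vb u (s, x)) * (vb u (s, x))‖ ≤ (9 / 2) * (Q ^ 8 * nn) := by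
    refine le_trans (nb (nb (nb (nb (nb (nb (by norm_num [norm_mul, Complex.norm_I] : ‖((9 / 2 : ℂ) * Complex.I)‖ ≤ (9 / 2)) ha0) hA0) hA0) hA0) hb0) hb0) ?_
    rw [show ((9 / 2) : ℝ) * (Q * nn) * (Q * nn) * (Q * nn) * (Q * nn) * (Q * nn) * (Q * nn) = (9 / 2) * (Q * nn) ^ 6 by ring]
    exact mul_le_mul_of_nonneg_left (mono8 hQ hn0 hn1 (by norm_num) (by norm_num)) (by norm_num)
  have hm9 : ‖(-1 / 4 : ℂ) * (u s x) * (u s x) * ((starRingEnd ℂ) (vb u (s, x))) * ((starRingEnd ℂ) (vc u (s, x)))‖ ≤ (1 / 4) * (Q ^ 8 * nn) := by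
    refine le_trans (nb (nb (nb (nb (by norm_num : ‖(-1 / 4 : ℂ)‖ ≤ (1 / 4)) ha0) ha0) hB0) hC0) ?_
    rw [show ((1 / 4) : ℝ) * (Q * nn) * (Q * nn) * (Q * nn) * (Q * nn) = (1 / 4) * (Q * nn) ^ 4 by ring]
    exact mul_le_mul_of_nonneg_left (mono8 hQ hn0 hn1 (by norm_num) (by norm_num)) (by norm_num)
  have hm10 : ‖(3 / 4 : ℂ) * (u s x) * (u s x) * ((starRingEnd ℂ) (u s x)) * ((starRingEnd ℂ) (vd u (s, x)))‖ ≤ (3 / 4) * (Q ^ 8 * nn) := by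
    refine le_trans (nb (nb (nb (nb (by norm_num : ‖(3 / 4 : ℂ)‖ ≤ (3 / 4)) ha0) ha0) hA0) hD0) ?_
    rw [show ((3 / 4) : ℝ) * (Q * nn) * (Q * nn) * (Q * nn) * (Q * nn) = (3 / 4) * (Q * nn) ^ 4 by ring]
    exact mul_le_mul_of_nonneg_left (mono8 hQ hn0 hn1 (by norm_num) (by norm_num)) (by norm_num)
  have hm11 : ‖((9 / 4 : ℂ) * Complex.I) * (u s x) * (u s x) * ((starRingEnd ℂ) (u s x)) * ((starRingEnd ℂ) (u s x)) * ((starRingEnd ℂ) (u s x)) * (vc u (s, x))‖ ≤ (9 / 4) * (Q ^ 8 * nn) := by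
    refine le_trans (nb (nb (nb (nb (nb (nb (by norm_num [norm_mul, Complex.norm_I] : ‖((9 / 4 : ℂ) * Complex.I)‖ ≤ (9 / 4)) ha0) ha0) hA0) hA0) hA0) hc0) ?_
    rw [show ((9 / 4) : ℝ) * (Q * nn) * (Q * nn) * (Q * nn) * (Q * nn) * (Q * nn) * (Q * nn) = (9 / 4) * (Q * nn) ^ 6 by ring]
    exact mul_le_mul_of_nonneg_left (mono8 hQ hn0 hn1 (by norm_num) (by norm_num)) (by norm_num)
  have hm12 : ‖((-9 / 2 : ℂ) * Complex.I) * (u s x) * (u s x) * (u s x) * ((starRingEnd ℂ) (u s x)) * ((starRingEnd ℂ) (vb u (s, x))) * ((starRingEnd ℂ) (vb u (s, x)))‖ ≤ (9 / 2) * (Q ^ 8 * nn) := by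
    refine le_trans (nb (nb (nb (nb (nb (nb (by norm_num [norm_mul, Complex.norm_I] : ‖((-9 / 2 : ℂ) * Complex.I)‖ ≤ (9 / 2)) ha0) ha0) ha0) hA0) hB0) hB0) ?_
    rw [show ((9 / 2) : ℝ) * (Q * nn) * (Q * nn) * (Q * nn) * (Q * nn) * (Q * nn) * (Q * nn) = (9 / 2) * (Q * nn) ^ 6 by ring]
    exact mul_le_mul_of_nonneg_left (mono8 hQ hn0 hn1 (by norm_num) (by norm_num)) (by norm_num)
  have hm13 : ‖((-9 / 4 : ℂ) * Complex.I) * (u s x) * (u s x) * (u s x) * ((starRingEnd ℂ) (u s x)) * ((starRingEnd ℂ) (u s x)) * ((starRingEnd ℂ) (vc u (s, x)))‖ ≤ (9 / 4) * (Q ^ 8 * nn) := by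
    refine le_trans (nb (nb (nb (nb (nb (nb (by norm_num [norm_mul, Complex.norm_I] : ‖((-9 / 4 : ℂ) * Complex.I)‖ ≤ (9 / 4)) ha0) ha0) ha0) hA0) hA0) hC0) ?_
    rw [show ((9 / 4) : ℝ) * (Q * nn) * (Q * nn) * (Q * nn) * (Q * nn) * (Q * nn) * (Q * nn) = (9 / 4) * (Q * nn) ^ 6 by ring]
    exact mul_le_mul_of_nonneg_left (mono8 hQ hn0 hn1 (by norm_num) (by norm_num)) (by norm_num)
  have hm14 : ‖(-9 / 2 : ℂ) * (u s x) * (u s x) * (u s x) * ((starRingEnd ℂ) (u s x)) * ((starRingEnd ℂ) (u s x)) * ((starRingEnd ℂ) (u s x)) * ((starRingEnd ℂ) (u s x)) * (vb u (s, x))‖ ≤ (9 / 2) * (Q ^ 8 * nn) := by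
    refine le_trans (nb (nb (nb (nb (nb (nb (nb (nb (by norm_num : ‖(-9 / 2 : ℂ)‖ ≤ (9 / 2)) ha0) ha0) ha0) hA0) hA0) hA0) hA0) hb0) ?_
    rw [show ((9 / 2) : ℝ) * (Q * nn) * (Q * nn) * (Q * nn) * (Q * nn) * (Q * nn) * (Q * nn) * (Q * nn) * (Q * nn) = (9 / 2) * (Q * nn) ^ 8 by ring]
    exact mul_le_mul_of_nonneg_left (mono8 hQ hn0 hn1 (by norm_num) (by norm_num)) (by norm_num)
  have hm15 : ‖(-9 / 2 : ℂ) * (u s x) * (u s x) * (u s x) * (u s x) * ((starRingEnd ℂ) (u s x)) * ((starRingEnd ℂ) (u s x)) * ((starRingEnd ℂ) (u s x)) * ((starRingEnd ℂ) (vb u (s, x)))‖ ≤ (9 / 2) * (Q ^ 8 * nn) := by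
    refine le_trans (nb (nb (nb (nb (nb (nb (nb (nb (by norm_num : ‖(-9 / 2 : ℂ)‖ ≤ (9 / 2)) ha0) ha0) ha0) ha0) hA0) hA0) hA0) hB0) ?_
    rw [show ((9 / 2) : ℝ) * (Q * nn) * (Q * nn) * (Q * nn) * (Q * nn) * (Q * nn) * (Q * nn) * (Q * nn) * (Q * nn) = (9 / 2) * (Q * nn) ^ 8 by ring]
    exact mul_le_mul_of_nonneg_left (mono8 hQ hn0 hn1 (by norm_num) (by norm_num)) (by norm_num)
  refine le_trans (le_trans (norm_add_le _ _) (add_le_add (le_trans (norm_add_le _ _) (add_le_add (le_trans (norm_add_le _ _) (add_le_add (le_trans (norm_add_le _ _) (add_le_add (le_trans (norm_add_le _ _) (add_le_add (le_trans (norm_add_le _ _) (add_le_add (le_trans (norm_add_le _ _) (add_le_add (le_trans (norm_add_le _ _) (add_le_add (le_trans (norm_add_le _ _) (add_le_add (le_trans (norm_add_le _ _) (add_le_add (le_trans (norm_add_le _ _) (add_le_add (le_trans (norm_add_le _ _) (add_le_add (le_trans (norm_add_le _ _) (add_le_add (le_trans (norm_add_le _ _) (add_le_add (le_trans (norm_add_le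 _ _) (add_le_add hm0 hm1)) hm2)) hm3)) hm4)) hm5)) hm6)) hm7)) hm8)) hm9)) hm10)) hm11)) hm12)) hm13)) hm14)) hm15)) (le_of_eq ?_)
  ring


theorem energy_hasDeriv {u : ℝ → ℝ → ℂ} (hu : IsDNLSSolution u) (t : ℝ) :
    HasDerivAt (fun s => ∫ x : ℝ, Edens u s x) 0 t := by
  obtain ⟨hsm, -, hdec, heq⟩ := hu
  have hsm : ContDiff ℝ (⊤:ℕ∞) (fun q : ℝ × ℝ => u q.1 q.2) := hsm
  have hK : IsCompact (Metric.closedBall t 1) := isCompact_closedBall t 1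
  have htK : t ∈ Metric.closedBall t 1 := Metric.mem_closedBall_self (by norm_num)
  obtain ⟨Ca, hCa0, hCa⟩ := decayOne hdec (g := fun p : ℝ × ℝ => u p.1 p.2) (it_a (u := u)) hK
  obtain ⟨Cb, hCb0, hCb⟩ := decayOne hdec (it_b hsm) hK
  obtain ⟨Cc, hCc0, hCc⟩ := decayOne hdec (it_c hsm) hK
  obtain ⟨Cd, hCd0, hCd⟩ := decayOne hdec (it_d hsm) hK
  obtain ⟨CT, hCT0, hCT⟩ := decayOne hdec (it_T hsm) hK
  obtain ⟨CU, hCU0, hCU⟩ := decayOne hdec (it_U hsm) hK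
  obtain ⟨Q, hQdef⟩ : ∃ Q : ℝ, Q = 1 + Ca + Cb + Cc + Cd + CT + CU := ⟨_, rfl⟩
  have hQ1 : 1 ≤ Q := by rw [hQdef]; linarith
  have hmax : ∀ s ∈ Metric.closedBall t 1, ∀ x : ℝ,
      ‖u s x‖ ≤ Q * (1 + x ^ 2)⁻¹ ∧ ‖vb u (s, x)‖ ≤ Q * (1 + x ^ 2)⁻¹ ∧
      ‖vc u (s, x)‖ ≤ Q * (1 + x ^ 2)⁻¹ ∧ ‖vd u (s, x)‖ ≤ Q * (1 + x ^ 2)⁻¹ ∧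
      ‖vt u (s, x)‖ ≤ Q * (1 + x ^ 2)⁻¹ ∧ ‖vt1 u (s, x)‖ ≤ Q * (1 + x ^ 2)⁻¹ := by
    intro s hs x
    have hinv : (0:ℝ) ≤ (1 + x ^ 2)⁻¹ := by positivity
    refine ⟨le_trans (hCa s hs x) ?_, le_trans (hCb s hs x) ?_, le_trans (hCc s hs x) ?_,
      le_trans (hCd s hs x) ?_, le_trans (hCT s hs x) ?_, le_trans (hCU s hs x) ?_⟩ <;>
      exact mul_le_mul_of_nonneg_right (by rw [hQdef]; linarith) hinv
  have hn0 : ∀ x : ℝ, (0:ℝ) ≤ (1 + x ^ 2)⁻¹ := fun x => by positivity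
  have hn1 : ∀ x : ℝ, (1 + x ^ 2 : ℝ)⁻¹ ≤ 1 := fun x => by
    rw [inv_le_one_iff₀]; right; nlinarith [sq_nonneg x]
  -- continuity facts
  have hca : Continuous (fun q : ℝ × ℝ => u q.1 q.2) := hsm.continuous
  have hcb : Continuous (vb u) := (smb hsm).continuous
  have hcc : Continuous (vc u) := (smc hsm).continuous
  have hcd : Continuous (vd u) := (smd hsm).continuous
  have hcT : Continuous (vt u) := (smt hsm).continuous
  have hcU : Continuous (vt1 u) := (smt1 hsm).continuous
  have hcCE : Continuous (fun p : ℝ × ℝ => CEp u p) := by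
    simp only [CEp, starRingEnd_apply]; fun_prop
  have hcW : Continuous (fun p : ℝ × ℝ => Wp u p) := by
    simp only [Wp, starRingEnd_apply]; fun_prop
  have hcY : Continuous (fun p : ℝ × ℝ => Yp u p) := by
    simp only [Yp, starRingEnd_apply]; fun_prop
  have hcG : Continuous (fun p : ℝ × ℝ => Gp u p) := by
    simp only [Gp, starRingEnd_apply]; fun_prop
  have hsec : ∀ s : ℝ, Continuous (fun x : ℝ => (s, x)) :=
    fun s => continuous_const.prodMk continuous_id
  -- integrability of the pieces
  have hintCE : Integrable (fun x => Edens u t x) := by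
    have hEq : (fun x => Edens u t x) = fun x => (CEp u (t, x)).re :=
      funext fun x => EdensEq hsm t x
    rw [hEq]
    refine Integrable.mono' ((integrable_inv_one_add_sq).const_mul (3 * Q ^ 8))
      ((Complex.continuous_re.comp (hcCE.comp (hsec t))).aestronglyMeasurable)
      (Filter.Eventually.of_forall fun x => ?_)
    obtain ⟨h1, h2, h3, h4, h5, h6⟩ := hmax t htK x
    calc ‖(CEp u (t, x)).re‖ ≤ ‖CEp u (t, x)‖ := by
          rw [Real.norm_eq_abs]; exact Complex.abs_re_le_norm _
      _ ≤ 3 * (Q ^ 8 * (1 + x ^ 2)⁻¹) := boundCE hQ1 (hn0 x) (hn1 x) h1 h2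
      _ = 3 * Q ^ 8 * (1 + x ^ 2)⁻¹ := by ring
  have hmain := hasDerivAt_integral_of_dominated_loc_of_deriv_le (μ := volume)
    (F := fun s x => Edens u s x) (F' := fun s x => (Wp u (s, x)).re)
    (bound := fun x => 11 * Q ^ 8 * (1 + x ^ 2)⁻¹) (Metric.ball_mem_nhds t one_pos)
    (Filter.Eventually.of_forall fun s => by
      have hEq : (fun x => Edens u s x) = fun x => (CEp u (s, x)).re :=
        funext fun x => EdensEq hsm s x
      show AEStronglyMeasurable (fun x : ℝ => Edens u s x) volume
      rw [hEq]
      exact (Complex.continuous_re.comp (hcCE.comp (hsec s))).aestronglyMeasurable)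
    hintCE
    ((Complex.continuous_re.comp (hcW.comp (hsec t))).aestronglyMeasurable)
    (Filter.Eventually.of_forall fun x => by
      intro s hs
      have hs' : s ∈ Metric.closedBall t 1 := Metric.ball_subset_closedBall hs
      obtain ⟨h1, h2, h3, h4, h5, h6⟩ := hmax s hs' x
      calc ‖(Wp u (s, x)).re‖ ≤ ‖Wp u (s, x)‖ := by
            rw [Real.norm_eq_abs]; exact Complex.abs_re_le_norm _
        _ ≤ 11 * (Q ^ 8 * (1 + x ^ 2)⁻¹) := boundW hQ1 (hn0 x) (hn1 x) h1 h2 h5 h6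
        _ = 11 * Q ^ 8 * (1 + x ^ 2)⁻¹ := by ring)
    ((integrable_inv_one_add_sq).const_mul (11 * Q ^ 8))
    (Filter.Eventually.of_forall fun x s _ => Hder hsm s x)
  have hzero : (∫ x : ℝ, (Wp u (t, x)).re) = 0 := by
    have hYeq : (fun x : ℝ => (Wp u (t, x)).re) = fun x => (Yp u (t, x)).re :=
      funext fun x => WYre hsm heq t x
    rw [hYeq]
    have hintY : Integrable (fun x => (Yp u (t, x)).re) := by
      refine Integrable.mono' ((integrable_inv_one_add_sq).const_mul ((91 / 2) * Q ^ 8))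
        ((Complex.continuous_re.comp (hcY.comp (hsec t))).aestronglyMeasurable)
        (Filter.Eventually.of_forall fun x => ?_)
      obtain ⟨h1, h2, h3, h4, h5, h6⟩ := hmax t htK x
      calc ‖(Yp u (t, x)).re‖ ≤ ‖Yp u (t, x)‖ := by
            rw [Real.norm_eq_abs]; exact Complex.abs_re_le_norm _
        _ ≤ (91 / 2) * (Q ^ 8 * (1 + x ^ 2)⁻¹) := boundY hQ1 (hn0 x) (hn1 x) h1 h2 h3 h4
        _ = (91 / 2) * Q ^ 8 * (1 + x ^ 2)⁻¹ := by ring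
    have hintG : Integrable (fun x => (Gp u (t, x)).re) := by
      refine Integrable.mono' ((integrable_inv_one_add_sq).const_mul ((121 / 8) * Q ^ 8))
        ((Complex.continuous_re.comp (hcG.comp (hsec t))).aestronglyMeasurable)
        (Filter.Eventually.of_forall fun x => ?_)
      obtain ⟨h1, h2, h3, h4, h5, h6⟩ := hmax t htK x
      calc ‖(Gp u (t, x)).re‖ ≤ ‖Gp u (t, x)‖ := by
            rw [Real.norm_eq_abs]; exact Complex.abs_re_le_norm _
        _ ≤ (121 / 8) * (Q ^ 8 * (1 + x ^ 2)⁻¹) := boundG hQ1 (hn0 x) (hn1 x) h1 h2 h3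
        _ = (121 / 8) * Q ^ 8 * (1 + x ^ 2)⁻¹ := by ring
    exact MeasureTheory.integral_eq_zero_of_hasDerivAt_of_integrable
      (fun x => Hflux hsm t x) hintY hintG
  rw [← hzero]
  exact hmain.2

/-- Conservation of energy for DNLS: `E(u(t))` is independent of time. -/
theorem dnls_energy_conservation (u : ℝ → ℝ → ℂ) (hu : IsDNLSSolution u) (t₁ t₂ : ℝ) :
    energy (u t₁) = energy (u t₂) := by
  have hkey := energy_hasDeriv hu
  have hdiff : Differentiable ℝ (fun s => ∫ x : ℝ, Edens u s x) :=
    fun s => (hkey s).differentiableAt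
  have hconst := is_const_of_deriv_eq_zero hdiff (fun s => (hkey s).deriv) t₁ t₂
  exact hconst
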